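/- arXiv:2501.02995 — 4 statements merged into one kernel-verified Lean document; each statement's English description precedes it below -/
import Mathlib

section
/- Let Γ be a bounded linear nonnegative self-adjoint operator on a Hilbert space H, π_D the orthogonal projection onto a finite-dimensional subspace, and suppose β := sup_{0<α≤1} ‖α(αI + Γ)^{-1}π_D‖ < 1. Then for every α ∈ (0,1] and h ∈ H, ‖α(α(I − π_D) + Γ)^{-1} h‖ ≤ (1/(1 − β)) ‖α(αI + Γ)^{-1} h‖, assuming α(I − π_D) + Γ is invertible. -/
open scoped RealInnerProductSpace

theorem stmt6
    {H : Type*} [NormedAddCommGroup H] [InnerProductSpace ℝ H] [CompleteSpace H]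
    (D : Submodule ℝ H) [FiniteDimensional ℝ D]
    (P : H →L[ℝ] H) (hP : P = D.subtypeL.comp (D.orthogonalProjectionOnto))
    (Γ : H →L[ℝ] H) (hsa : IsSelfAdjoint Γ) (hnn : ∀ x : H, 0 ≤ ⟪Γ x, x⟫)
    (R : ℝ → (H →L[ℝ] H))
    (hR₁ : ∀ α ∈ Set.Ioc (0:ℝ) 1, (α • (1 : H →L[ℝ] H) + Γ).comp (R α) = 1)
    (hR₂ : ∀ α ∈ Set.Ioc (0:ℝ) 1, (R α).comp (α • (1 : H →L[ℝ] H) + Γ) = 1)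
    (Q : ℝ → (H →L[ℝ] H))
    (hQ₁ : ∀ α ∈ Set.Ioc (0:ℝ) 1, (α • (1 - P) + Γ).comp (Q α) = 1)
    (hQ₂ : ∀ α ∈ Set.Ioc (0:ℝ) 1, (Q α).comp (α • (1 - P) + Γ) = 1)
    (β : ℝ) (hβ : β < 1)
    (hβsup : ∀ α ∈ Set.Ioc (0:ℝ) 1, ‖α • ((R α).comp P)‖ ≤ β) :
    ∀ α ∈ Set.Ioc (0:ℝ) 1, ∀ h : H,
      ‖(α • Q α) h‖ ≤ (1 / (1 - β)) * ‖(α • R α) h‖ := by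
  intro α hα h
  set v : H := Q α h with hv
  set u : H := α • v with hu
  -- (α(1-P)+Γ) v = h
  have h1 : α • v - α • P v + Γ v = h := by
    have := congrArg (fun T : H →L[ℝ] H => T h) (hQ₁ α hα)
    simpa [ContinuousLinearMap.comp_apply, ContinuousLinearMap.add_apply,
      ContinuousLinearMap.smul_apply, ContinuousLinearMap.sub_apply, sub_smul, smul_sub] using this
  -- (αI + Γ) v = h + α • P v
  have h2 : α • v + Γ v = h + α • P v := by
    have := h1
    abel_nf at this ⊢
    linear_combination (norm := abel) this
  -- v = R α (h + α • P v)
  have h3 : v = R α (h + α • P v) := by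
    have := congrArg (fun T : H →L[ℝ] H => T v) (hR₂ α hα)
    simp only [ContinuousLinearMap.comp_apply, ContinuousLinearMap.add_apply,
      ContinuousLinearMap.smul_apply, ContinuousLinearMap.one_apply] at this
    rw [h2] at this; exact this.symm
  -- identity u = (α • R α) h + (α • (R α).comp P) u
  have h4 : u = (α • R α) h + (α • ((R α).comp P)) u := by
    rw [hu]
    nth_rewrite 1 [h3]
    simp only [ContinuousLinearMap.smul_apply, ContinuousLinearMap.comp_apply, map_add, map_smul,
      smul_add, smul_smul]
  have hβ0 : ‖u‖ ≤ ‖(α • R α) h‖ + β * ‖u‖ := by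
    calc ‖u‖ ≤ ‖(α • R α) h‖ + ‖(α • ((R α).comp P)) u‖ := by
          nth_rewrite 1 [h4]; exact norm_add_le _ _
      _ ≤ ‖(α • R α) h‖ + β * ‖u‖ := by
          gcongr
          exact (α • ((R α).comp P)).le_of_opNorm_le (hβsup α hα) u
  have h1β : 0 < 1 - β := by linarith
  have key : (1 - β) * ‖u‖ ≤ ‖(α • R α) h‖ := by nlinarith
  have : ‖(α • Q α) h‖ = ‖u‖ := by simp [hu, hv]
  rw [this, div_mul_eq_mul_div, le_div_iff₀ h1β, one_mul, mul_comm]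
  exact key
end

section
/- Let Γ be a bounded linear nonnegative self-adjoint operator on a Hilbert space H and π_D the orthogonal projection onto a finite-dimensional subspace. If α(αI + Γ)^{-1} → 0 strongly as α → 0⁺ (i.e. for every h ∈ H, ‖α(αI + Γ)^{-1}h‖ → 0), then also α(α(I − π_D) + Γ)^{-1} → 0 strongly as α → 0⁺, provided sup_{0<α≤1}‖α(αI + Γ)^{-1}π_D‖ < 1 and the operators α(I − π_D) + Γ are invertible. -/
open scoped RealInnerProductSpace

theorem stmt7
    {H : Type*} [NormedAddCommGroup H] [InnerProductSpace ℝ H] [CompleteSpace H]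
    (D : Submodule ℝ H) [FiniteDimensional ℝ D]
    (P : H →L[ℝ] H) (hP : P = D.subtypeL.comp (D.orthogonalProjectionOnto))
    (Γ : H →L[ℝ] H) (hsa : IsSelfAdjoint Γ) (hnn : ∀ x : H, 0 ≤ ⟪Γ x, x⟫)
    (R : ℝ → (H →L[ℝ] H))
    (hR₁ : ∀ α > (0:ℝ), (α • (1 : H →L[ℝ] H) + Γ).comp (R α) = 1)
    (hR₂ : ∀ α > (0:ℝ), (R α).comp (α • (1 : H →L[ℝ] H) + Γ) = 1)
    (Q : ℝ → (H →L[ℝ] H))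
    (hQ₁ : ∀ α > (0:ℝ), (α • (1 - P) + Γ).comp (Q α) = 1)
    (hQ₂ : ∀ α > (0:ℝ), (Q α).comp (α • (1 - P) + Γ) = 1)
    (β : ℝ) (hβ : β < 1)
    (hβsup : ∀ α ∈ Set.Ioc (0:ℝ) 1, ‖α • ((R α).comp P)‖ ≤ β)
    (hstrong : ∀ h : H,
      Filter.Tendsto (fun α : ℝ => ‖(α • R α) h‖) (nhdsWithin 0 (Set.Ioi 0)) (nhds 0)) :
    ∀ h : H,
      Filter.Tendsto (fun α : ℝ => ‖(α • Q α) h‖) (nhdsWithin 0 (Set.Ioi 0)) (nhds 0) := by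
  intro h
  have hβ0 : (0:ℝ) ≤ β :=
    le_trans (norm_nonneg _) (hβsup 1 ⟨one_pos, le_refl 1⟩)
  have h1β : (0:ℝ) < 1 - β := by linarith
  -- key algebraic identity
  have key : ∀ α > (0:ℝ), (1 - α • ((R α).comp P)).comp (Q α) = R α := by
    intro α hα
    have h1 : (R α).comp (α • (1 - P) + Γ) = 1 - α • ((R α).comp P) := by
      have e : (α • ((1:H →L[ℝ] H) - P) + Γ) = (α • (1:H →L[ℝ] H) + Γ) - α • P := by
        ext x
        simp [smul_sub]
        abel
      rw [e]
      ext x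
      have := congrArg (fun T : H →L[ℝ] H => T x) (hR₂ α hα)
      simp only [ContinuousLinearMap.comp_apply, ContinuousLinearMap.sub_apply,
        ContinuousLinearMap.smul_apply, ContinuousLinearMap.one_apply, map_sub,
        map_smul] at this ⊢
      rw [this]
    calc (1 - α • ((R α).comp P)).comp (Q α)
        = ((R α).comp (α • (1 - P) + Γ)).comp (Q α) := by rw [h1]
      _ = (R α).comp ((α • (1 - P) + Γ).comp (Q α)) := by
          rw [ContinuousLinearMap.comp_assoc]
      _ = R α := by rw [hQ₁ α hα]; exact (R α).comp_id
  -- the pointwise bound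
  have bound : ∀ α ∈ Set.Ioc (0:ℝ) 1,
      ‖(α • Q α) h‖ ≤ (1 - β)⁻¹ * ‖(α • R α) h‖ := by
    intro α hα
    have hα0 := hα.1
    have e : (α • Q α) h = (α • R α) h + (α • ((R α).comp P)) ((α • Q α) h) := by
      have := congrArg (fun T : H →L[ℝ] H => α • T h) (key α hα0)
      simp only [ContinuousLinearMap.comp_apply, ContinuousLinearMap.sub_apply,
        ContinuousLinearMap.smul_apply, ContinuousLinearMap.one_apply] at this ⊢
      rw [smul_sub] at this
      have : α • (Q α) h = α • (R α) h + α • α • (R α) (P ((Q α) h)) := by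
        rw [← this]; abel
      rw [map_smul P, map_smul (R α)]
      exact this
    have h2 : ‖(α • Q α) h‖ ≤ ‖(α • R α) h‖ + β * ‖(α • Q α) h‖ := by
      calc ‖(α • Q α) h‖ = ‖(α • R α) h + (α • ((R α).comp P)) ((α • Q α) h)‖ := by rw [← e]
        _ ≤ ‖(α • R α) h‖ + ‖(α • ((R α).comp P)) ((α • Q α) h)‖ := norm_add_le _ _
        _ ≤ ‖(α • R α) h‖ + ‖α • ((R α).comp P)‖ * ‖(α • Q α) h‖ := by
            gcongr; exact ContinuousLinearMap.le_opNorm _ _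
        _ ≤ ‖(α • R α) h‖ + β * ‖(α • Q α) h‖ :=
            add_le_add_right (mul_le_mul_of_nonneg_right (hβsup α hα) (norm_nonneg _)) _
    rw [inv_mul_eq_div, le_div_iff₀ h1β]
    nlinarith [norm_nonneg ((α • Q α) h)]
  -- squeeze
  have hIoc : Set.Ioc (0:ℝ) 1 ∈ nhdsWithin (0:ℝ) (Set.Ioi 0) := by
    rw [← Set.Ioi_inter_Iic]
    exact Filter.inter_mem self_mem_nhdsWithin
      (mem_nhdsWithin_of_mem_nhds (Iic_mem_nhds one_pos))
  have hlim : Filter.Tendsto (fun α : ℝ => (1 - β)⁻¹ * ‖(α • R α) h‖)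
      (nhdsWithin 0 (Set.Ioi 0)) (nhds 0) := by
    have := (hstrong h).const_mul ((1 - β)⁻¹)
    simpa using this
  refine squeeze_zero' ?_ ?_ hlim
  · exact Filter.Eventually.of_forall (fun _ => norm_nonneg _)
  · exact Filter.eventually_of_mem hIoc bound
end

section
/- Let Γ be a bounded linear self-adjoint nonnegative operator on a Hilbert space H. Then Γ is strictly positive (⟨Γh, h⟩ > 0 for all h ≠ 0) if and only if α(αI + Γ)^{-1} → 0 as α → 0⁺ in the strong operator topology. -/
open scoped RealInnerProductSpace

theorem stmt8
    {H : Type*} [NormedAddCommGroup H] [InnerProductSpace ℝ H] [CompleteSpace H]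
    [TopologicalSpace.SeparableSpace H]
    (Γ : H →L[ℝ] H) (hsa : IsSelfAdjoint Γ) (hnn : ∀ x : H, 0 ≤ ⟪Γ x, x⟫)
    (R : ℝ → (H →L[ℝ] H))
    (hR₁ : ∀ α > (0:ℝ), (α • (1 : H →L[ℝ] H) + Γ).comp (R α) = 1)
    (hR₂ : ∀ α > (0:ℝ), (R α).comp (α • (1 : H →L[ℝ] H) + Γ) = 1) :
    (∀ h : H, h ≠ 0 → 0 < ⟪Γ h, h⟫) ↔
      (∀ h : H, Filter.Tendsto (fun α : ℝ => ‖(α • R α) h‖)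
        (nhdsWithin 0 (Set.Ioi 0)) (nhds 0)) := by
  have hsym : ∀ x y : H, ⟪Γ x, y⟫ = ⟪x, Γ y⟫ := fun x y => hsa.isSymmetric x y
  have happ₁ : ∀ α > (0:ℝ), ∀ h : H, α • R α h + Γ (R α h) = h := by
    intro α hα h
    have := ContinuousLinearMap.ext_iff.mp (hR₁ α hα) h
    simpa [ContinuousLinearMap.comp_apply, ContinuousLinearMap.add_apply,
      ContinuousLinearMap.smul_apply] using this
  have happ₂ : ∀ α > (0:ℝ), ∀ h : H, R α (α • h + Γ h) = h := by
    intro α hα h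
    have := ContinuousLinearMap.ext_iff.mp (hR₂ α hα) h
    simpa [ContinuousLinearMap.comp_apply, ContinuousLinearMap.add_apply,
      ContinuousLinearMap.smul_apply] using this
  have hbound : ∀ α > (0:ℝ), ∀ h : H, α * ‖R α h‖ ≤ ‖h‖ := by
    intro α hα h
    set y := R α h with hy
    have h1 : α • y + Γ y = h := happ₁ α hα h
    have h2 : α * (‖y‖ * ‖y‖) ≤ ⟪h, y⟫ := by
      have e : ⟪h, y⟫ = α * ⟪y, y⟫ + ⟪Γ y, y⟫ := by
        rw [← h1, inner_add_left, real_inner_smul_left]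
      rw [e, real_inner_self_eq_norm_mul_norm]
      linarith [hnn y]
    have h3 : ⟪h, y⟫ ≤ ‖h‖ * ‖y‖ := real_inner_le_norm h y
    rcases eq_or_lt_of_le (norm_nonneg y) with h0 | h0
    · rw [← h0, mul_zero]; exact norm_nonneg h
    · have h4 : α * ‖y‖ * ‖y‖ ≤ ‖h‖ * ‖y‖ := by nlinarith
      exact le_of_mul_le_mul_right h4 h0
  constructor
  · -- strict positivity ⇒ strong convergence
    intro hpos h
    have hdense : Dense (Set.range Γ) := by
      have horth : (LinearMap.range (Γ : H →ₗ[ℝ] H))ᗮ = ⊥ := by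
        rw [Submodule.eq_bot_iff]
        intro x hx
        by_contra hx0
        have := (Submodule.mem_orthogonal _ x).mp hx (Γ x) (LinearMap.mem_range_self _ x)
        have h2 : ⟪Γ x, x⟫ = 0 := this
        exact absurd h2 (ne_of_gt (hpos x hx0))
      have hd := Submodule.topologicalClosure_eq_top_iff.mpr horth
      have hcl : closure ((LinearMap.range (Γ : H →ₗ[ℝ] H) : Submodule ℝ H) : Set H)
          = Set.univ := by
        rw [← Submodule.topologicalClosure_coe, hd, Submodule.top_coe]
      have hd2 : Dense ((LinearMap.range (Γ : H →ₗ[ℝ] H) : Submodule ℝ H) : Set H) :=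
        dense_iff_closure_eq.mpr hcl
      simpa [LinearMap.coe_range] using hd2
    rw [Metric.tendsto_nhdsWithin_nhds]
    intro ε hε
    obtain ⟨g, hg⟩ := hdense.exists_dist_lt h (half_pos hε)
    obtain ⟨g', rfl⟩ := hg.1
    have hgd : ‖h - Γ g'‖ < ε / 2 := by
      rw [← dist_eq_norm]; exact hg.2
    refine ⟨ε / (4 * (‖g'‖ + 1)), by positivity, ?_⟩
    intro α hα hαd
    have hα0 : 0 < α := hα
    rw [Real.dist_eq, sub_zero, abs_of_pos hα0] at hαd
    rw [Real.dist_eq, sub_zero]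
    have key : (α • R α) h = α • R α (h - Γ g') + α • R α (Γ g') := by
      simp [ContinuousLinearMap.smul_apply, ← smul_add, ← map_add]
    have hRΓ : R α (Γ g') = g' - α • R α g' := by
      have := happ₂ α hα0 g'
      have e : R α (Γ g') = R α (α • g' + Γ g') - R α (α • g') := by
        rw [← map_sub]; congr 1; abel
      rw [e, this, ContinuousLinearMap.map_smul]
    have hterm1 : ‖α • R α (h - Γ g')‖ < ε / 2 := by
      rw [norm_smul, Real.norm_eq_abs, abs_of_pos hα0]
      exact lt_of_le_of_lt (hbound α hα0 _) hgd
    have hterm2 : ‖α • R α (Γ g')‖ ≤ 2 * α * ‖g'‖ := by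
      rw [norm_smul, Real.norm_eq_abs, abs_of_pos hα0, hRΓ]
      have h5 : ‖g' - α • R α g'‖ ≤ ‖g'‖ + ‖α • R α g'‖ := norm_sub_le _ _
      have h6 : ‖α • R α g'‖ ≤ ‖g'‖ := by
        rw [norm_smul, Real.norm_eq_abs, abs_of_pos hα0]
        exact hbound α hα0 g'
      calc α * ‖g' - α • R α g'‖ ≤ α * (‖g'‖ + ‖g'‖) := by
            apply mul_le_mul_of_nonneg_left _ hα0.le; linarith
        _ = 2 * α * ‖g'‖ := by ring
    have hterm2' : 2 * α * ‖g'‖ < ε / 2 := by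
      have h7 : α < ε / (4 * (‖g'‖ + 1)) := hαd
      have h8 : (0:ℝ) < ‖g'‖ + 1 := by positivity
      have h9 : 2 * α * ‖g'‖ < 2 * (ε / (4 * (‖g'‖ + 1))) * (‖g'‖ + 1) := by
        have : 2 * α * ‖g'‖ ≤ 2 * α * (‖g'‖ + 1) := by nlinarith
        have h10 : 2 * α * (‖g'‖ + 1) < 2 * (ε / (4 * (‖g'‖ + 1))) * (‖g'‖ + 1) := by
          apply mul_lt_mul_of_pos_right _ h8
          linarith
        linarith
      have h11 : 2 * (ε / (4 * (‖g'‖ + 1))) * (‖g'‖ + 1) = ε / 2 := by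
        field_simp; ring
      linarith [h9, h11.le]
    have : ‖(α • R α) h‖ < ε := by
      rw [key]
      calc ‖α • R α (h - Γ g') + α • R α (Γ g')‖
          ≤ ‖α • R α (h - Γ g')‖ + ‖α • R α (Γ g')‖ := norm_add_le _ _
        _ < ε / 2 + ε / 2 := by linarith
        _ = ε := by ring
    rwa [abs_of_nonneg (norm_nonneg _)]
  · -- strong convergence ⇒ strict positivity
    intro htend h hne
    rcases (hnn h).lt_or_eq with hlt | heq
    · exact hlt
    exfalso
    have heq' : ⟪Γ h, h⟫ = 0 := heq.symm
    have hb : ∀ y : H, ⟪Γ h, y⟫ = 0 := by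
      intro y
      set b := ⟪Γ h, y⟫ with hbdef
      set c := ⟪Γ y, y⟫ with hcdef
      have hc : 0 ≤ c := hnn y
      have key : ∀ t : ℝ, 0 ≤ c * (t * t) + (2 * b) * t + 0 := by
        intro t
        have h0 := hnn (h + t • y)
        have hexp : ⟪Γ (h + t • y), h + t • y⟫
            = ⟪Γ h, h⟫ + t * ⟪Γ h, y⟫ + t * ⟪Γ y, h⟫ + t * (t * ⟪Γ y, y⟫) := by
          rw [map_add, map_smul, inner_add_left, inner_add_right, inner_add_right,
            real_inner_smul_left, real_inner_smul_left, real_inner_smul_right,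
            real_inner_smul_right]
          ring
        have hyh : ⟪Γ y, h⟫ = ⟪Γ h, y⟫ := by
          rw [hsym y h, real_inner_comm]
        rw [hexp, heq', hyh] at h0
        nlinarith [h0]
      have hdisc := discrim_le_zero key
      rw [discrim] at hdisc
      nlinarith [hdisc]
    have hΓh : Γ h = 0 := by
      have := hb (Γ h)
      exact inner_self_eq_zero.mp this
    have hconst : ∀ α ∈ Set.Ioi (0:ℝ), ‖(α • R α) h‖ = ‖h‖ := by
      intro α hα
      have e1 : R α (α • h + Γ h) = h := happ₂ α hα h
      rw [hΓh, add_zero, ContinuousLinearMap.map_smul] at e1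
      simp [ContinuousLinearMap.smul_apply, e1]
    have h1 : Filter.Tendsto (fun α : ℝ => ‖(α • R α) h‖)
        (nhdsWithin 0 (Set.Ioi 0)) (nhds ‖h‖) := by
      apply Filter.Tendsto.congr' _ tendsto_const_nhds
      filter_upwards [self_mem_nhdsWithin] with α hα
      exact (hconst α hα).symm
    have := tendsto_nhds_unique h1 (htend h)
    exact hne (norm_eq_zero.mp this)
end

section
/- Let S(t)w = Σ_{n=1}^∞ e^{−n²t}⟨w,e_n⟩e_n on H = L²(0,1) and Ω as in the heat-equation example (Ωu = 2u₂e₁ + Σ_{n≥2} u_n e_n on U = span{e_n : n ≥ 2}). Then for any 0 ≤ a < b, the Gramian Γ := ∫_a^b S(b−s) Ω Ω* S*(b−s) ds is strictly positive on H: ⟨Γh, h⟩ > 0 for every h ≠ 0. -/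
open scoped RealInnerProductSpace ENNReal NNReal
open ContinuousLinearMap

noncomputable section

namespace Stmt17Aux

open MeasureTheory Set

variable {H : Type*} [NormedAddCommGroup H] [InnerProductSpace ℝ H] [CompleteSpace H]

lemma two_toReal : ((2 : ℝ≥0∞)).toReal = (2 : ℝ) := by norm_num

lemma memℓp_two_of_le (e : HilbertBasis ℕ ℝ H) (w : H) (f : ℕ → ℝ)
    (hf : ∀ n, |f n| ≤ |e.repr w n|) : Memℓp f 2 := by
  apply memℓp_gen
  have h2 : (0 : ℝ) < (2 : ℝ≥0∞).toReal := by rw [two_toReal]; norm_num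
  have hs := (lp.memℓp (e.repr w)).summable h2
  refine Summable.of_nonneg_of_le (fun n => Real.rpow_nonneg (norm_nonneg _) _) (fun n => ?_) hs
  exact Real.rpow_le_rpow (norm_nonneg _)
    (by simpa [Real.norm_eq_abs] using hf n) h2.le

lemma repr_S (e : HilbertBasis ℕ ℝ H) (S : ℝ → (H →L[ℝ] H))
    (hS : ∀ t ≥ (0:ℝ), ∀ w : H,
      S t w = ∑' n : ℕ, (Real.exp (-((n : ℝ) + 1) ^ 2 * t) * e.repr w n) • e n)
    {t : ℝ} (ht : 0 ≤ t) (w : H) (n : ℕ) :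
    e.repr (S t w) n = Real.exp (-((n : ℝ) + 1) ^ 2 * t) * e.repr w n := by
  have hb : ∀ m : ℕ, |Real.exp (-((m : ℝ) + 1) ^ 2 * t) * e.repr w m| ≤ |e.repr w m| := by
    intro m
    rw [abs_mul, abs_of_pos (Real.exp_pos _)]
    have h1 : Real.exp (-((m : ℝ) + 1) ^ 2 * t) ≤ 1 := by
      apply Real.exp_le_one_iff.mpr
      have : (0:ℝ) ≤ ((m : ℝ) + 1) ^ 2 := sq_nonneg _
      nlinarith
    nlinarith [abs_nonneg (e.repr w m)]
  have hmem : Memℓp (fun m : ℕ => Real.exp (-((m : ℝ) + 1) ^ 2 * t) * e.repr w m) 2 :=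
    memℓp_two_of_le e w _ hb
  set f : lp (fun _ : ℕ => ℝ) 2 := ⟨_, hmem⟩ with hf
  have hsum := e.hasSum_repr_symm f
  have heq : S t w = e.repr.symm f := by
    rw [hS t ht w, ← hsum.tsum_eq]
  rw [heq, LinearIsometryEquiv.apply_symm_apply]

lemma hasSum_S (e : HilbertBasis ℕ ℝ H) (S : ℝ → (H →L[ℝ] H))
    (hS : ∀ t ≥ (0:ℝ), ∀ w : H,
      S t w = ∑' n : ℕ, (Real.exp (-((n : ℝ) + 1) ^ 2 * t) * e.repr w n) • e n)
    {t : ℝ} (ht : 0 ≤ t) (w : H) :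
    HasSum (fun n : ℕ => (Real.exp (-((n : ℝ) + 1) ^ 2 * t) * e.repr w n) • e n) (S t w) := by
  have := e.hasSum_repr (S t w)
  convert this using 2 with n
  rw [repr_S e S hS ht w n]

lemma norm_le_of_repr_le (e : HilbertBasis ℕ ℝ H) {v w : H} {C : ℝ} (hC : 0 ≤ C)
    (h : ∀ n, |e.repr v n| ≤ C * |e.repr w n|) : ‖v‖ ≤ C * ‖w‖ := by
  have h2 : (0 : ℝ) < (2 : ℝ≥0∞).toReal := by rw [two_toReal]; norm_num
  rw [← e.repr.norm_map v, ← e.repr.norm_map w]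
  apply lp.norm_le_of_tsum_le h2 (mul_nonneg hC (norm_nonneg _))
  rw [Real.mul_rpow hC (norm_nonneg _), lp.norm_rpow_eq_tsum h2, ← tsum_mul_left]
  refine Summable.tsum_le_tsum (fun n => ?_) ((lp.memℓp _).summable h2)
    (((lp.memℓp (e.repr w)).summable h2).mul_left _)
  rw [← Real.mul_rpow hC (norm_nonneg _)]
  exact Real.rpow_le_rpow (norm_nonneg _)
    (by simpa [Real.norm_eq_abs] using h n) h2.le

lemma exp_diff_le {K ε t t' : ℝ} (hK : 1 ≤ K) (hε : 0 < ε) (ht : ε ≤ t) (ht' : ε ≤ t') :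
    |Real.exp (-K * t) - Real.exp (-K * t')| ≤ |t - t'| / ε := by
  wlog hle : t' ≤ t with Hw
  · rw [abs_sub_comm, abs_sub_comm t]
    exact Hw hK hε ht' ht (le_of_not_ge hle)
  have hK0 : (0:ℝ) < K := by linarith
  have h1 : Real.exp (-K * t) ≤ Real.exp (-K * t') := Real.exp_le_exp.mpr (by nlinarith)
  rw [abs_sub_comm, abs_of_nonneg (by linarith),
    abs_of_nonneg (by linarith : (0:ℝ) ≤ t - t')]
  have key : Real.exp (-K * t') - Real.exp (-K * t)
      = Real.exp (-K * t') * (1 - Real.exp (-K * (t - t'))) := by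
    rw [mul_sub, mul_one, ← Real.exp_add]
    ring_nf
  rw [key]
  have h2 : 1 - Real.exp (-K * (t - t')) ≤ K * (t - t') := by
    nlinarith [Real.add_one_le_exp (-K * (t - t'))]
  have h3 : Real.exp (-K * t') ≤ 1 / (K * ε) := by
    have ha : Real.exp (-K * t') ≤ Real.exp (-(K * ε)) :=
      Real.exp_le_exp.mpr (by nlinarith)
    have hb : K * ε ≤ Real.exp (K * ε) := by
      nlinarith [Real.add_one_le_exp (K * ε)]
    have hc : (0:ℝ) < K * ε := by positivity
    calc Real.exp (-K * t') ≤ Real.exp (-(K * ε)) := ha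
      _ = 1 / Real.exp (K * ε) := by rw [Real.exp_neg]; rw [one_div]
      _ ≤ 1 / (K * ε) := by
          apply one_div_le_one_div_of_le hc hb
  have h4 : 0 ≤ 1 - Real.exp (-K * (t - t')) := by
    have : Real.exp (-K * (t - t')) ≤ 1 := Real.exp_le_one_iff.mpr (by nlinarith)
    linarith
  have h5 : (0:ℝ) < K * ε := by positivity
  calc Real.exp (-K * t') * (1 - Real.exp (-K * (t - t')))
      ≤ (1 / (K * ε)) * (K * (t - t')) := by
        apply mul_le_mul h3 h2 h4 (by positivity)
    _ = (t - t') / ε := by field_simp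
  done

end Stmt17Aux

end

set_option maxHeartbeats 1000000 in
theorem stmt17
    {H : Type*} [NormedAddCommGroup H] [InnerProductSpace ℝ H] [CompleteSpace H]
    (e : HilbertBasis ℕ ℝ H)
    -- the diagonal heat semigroup (e 0 = e₁, eigenvalue of e n is (n+1)²)
    (S : ℝ → (H →L[ℝ] H))
    (hS : ∀ t ≥ (0:ℝ), ∀ w : H,
      S t w = ∑' n : ℕ, (Real.exp (-((n : ℝ) + 1) ^ 2 * t) * e.repr w n) • e n)
    -- U = span closure of {e n : n ≥ 1}
    (U : Submodule ℝ H)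
    (hU : U = (Submodule.span ℝ (e '' Set.Ici 1)).topologicalClosure)
    [CompleteSpace U]
    (Ω : U →L[ℝ] H)
    (hΩ : ∀ u : U, Ω u = (2 * e.repr (u : H) 1) • e 0 + (u : H))
    (a b : ℝ) (ha : 0 ≤ a) (hab : a < b)
    (Γ : H →L[ℝ] H)
    (hΓ : Γ = ∫ s in a..b,
      (S (b - s)).comp (Ω.comp ((adjoint Ω).comp (adjoint (S (b - s))))) ) :
    ∀ h : H, h ≠ 0 → 0 < ⟪Γ h, h⟫ := by
  classical
  intro h hh
  open MeasureTheory Set intervalIntegral in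
  -- basic facts about S
  have hrepr : ∀ t, 0 ≤ t → ∀ w : H, ∀ n,
      e.repr (S t w) n = Real.exp (-((n : ℝ) + 1) ^ 2 * t) * e.repr w n :=
    fun t ht w n => Stmt17Aux.repr_S e S hS ht w n
  have hsum : ∀ t, 0 ≤ t → ∀ w : H,
      HasSum (fun n : ℕ => (Real.exp (-((n : ℝ) + 1) ^ 2 * t) * e.repr w n) • e n) (S t w) :=
    fun t ht w => Stmt17Aux.hasSum_S e S hS ht w
  have hcle : ∀ (n : ℕ) (t : ℝ), 0 ≤ t → Real.exp (-((n : ℝ) + 1) ^ 2 * t) ≤ 1 := by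
    intro n t ht
    apply Real.exp_le_one_iff.mpr
    have : (0:ℝ) ≤ ((n : ℝ) + 1) ^ 2 := sq_nonneg _
    nlinarith
  have hSw : ∀ t, 0 ≤ t → ∀ w : H, ‖S t w‖ ≤ ‖w‖ := by
    intro t ht w
    have := Stmt17Aux.norm_le_of_repr_le e (v := S t w) (w := w) (C := 1) zero_le_one ?_
    · simpa using this
    · intro n
      rw [hrepr t ht w n, abs_mul, one_mul, abs_of_pos (Real.exp_pos _)]
      nlinarith [hcle n t ht, abs_nonneg (e.repr w n), Real.exp_pos (-((n : ℝ) + 1) ^ 2 * t)]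
  have hSnorm : ∀ t, 0 ≤ t → ‖S t‖ ≤ 1 := fun t ht =>
    ContinuousLinearMap.opNorm_le_bound _ zero_le_one (fun w => by
      simpa using hSw t ht w)
  -- difference estimate
  have hdiff : ∀ ε : ℝ, 0 < ε → ∀ t t' : ℝ, ε ≤ t → ε ≤ t' → ∀ w : H,
      ‖S t w - S t' w‖ ≤ (|t - t'| / ε) * ‖w‖ := by
    intro ε hε t t' ht ht' w
    apply Stmt17Aux.norm_le_of_repr_le e (by positivity)
    intro n
    have hmap : e.repr (S t w - S t' w) n = e.repr (S t w) n - e.repr (S t' w) n := by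
      rw [map_sub]
      simp
    rw [hmap, hrepr t (by linarith) w n, hrepr t' (by linarith) w n, ← sub_mul, abs_mul]
    have hK : (1:ℝ) ≤ ((n : ℝ) + 1) ^ 2 := by
      have : (0:ℝ) ≤ (n : ℝ) := Nat.cast_nonneg n
      nlinarith
    have := Stmt17Aux.exp_diff_le hK hε ht ht'
    have habs : (0:ℝ) ≤ |e.repr w n| := abs_nonneg _
    nlinarith
  -- self-adjointness
  have hinner : ∀ t, 0 ≤ t → ∀ x y : H,
      ⟪S t x, y⟫ = ∑' n : ℕ, Real.exp (-((n : ℝ) + 1) ^ 2 * t) * e.repr x n * e.repr y n := by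
    intro t ht x y
    have h1 := (hsum t ht x).mapL (innerSL ℝ y)
    have h2 : ⟪y, S t x⟫ = ∑' n : ℕ,
        innerSL ℝ y ((Real.exp (-((n : ℝ) + 1) ^ 2 * t) * e.repr x n) • e n) :=
      h1.tsum_eq.symm
    rw [real_inner_comm, h2]
    congr 1
    funext n
    simp only [innerSL_apply_apply, inner_smul_right]
    have h3 : ⟪y, e n⟫ = e.repr y n :=
      (real_inner_comm (e n) y).trans (e.repr_apply_apply y n).symm
    exact congrArg (fun z => Real.exp (-((n : ℝ) + 1) ^ 2 * t) * e.repr x n * z) h3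
  have hSA : ∀ t, 0 ≤ t → adjoint (S t) = S t := by
    intro t ht
    symm
    rw [ContinuousLinearMap.eq_adjoint_iff]
    intro x y
    rw [hinner t ht x y, real_inner_comm, hinner t ht y x]
    congr 1
    funext n
    ring
  -- the integrand
  set F : ℝ → H →L[ℝ] H := fun s =>
    (S (b - s)).comp (Ω.comp ((adjoint Ω).comp (adjoint (S (b - s))))) with hF
  -- continuity of s ↦ S (b - s) on Ioo a b
  have hScont : ∀ s₀ ∈ Set.Ioo a b, ContinuousAt (fun s => S (b - s)) s₀ := by
    intro s₀ hs₀
    have hε0 : 0 < (b - s₀) / 2 := by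
      have := hs₀.2
      linarith
    apply continuousAt_of_locally_lipschitz hε0 (1 / ((b - s₀) / 2))
    intro s hsd
    rw [Real.dist_eq] at hsd
    have h1 : (b - s₀) / 2 ≤ b - s := by
      have := abs_lt.mp hsd
      linarith [this.2]
    have h2 : (b - s₀) / 2 ≤ b - s₀ := by linarith
    rw [dist_eq_norm, dist_eq_norm]
    apply ContinuousLinearMap.opNorm_le_bound _ (by positivity)
    intro w
    have := hdiff ((b - s₀) / 2) hε0 (b - s) (b - s₀) h1 h2 w
    have habs : |(b - s) - (b - s₀)| = |s - s₀| := by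
      rw [show (b - s) - (b - s₀) = -(s - s₀) by ring, abs_neg]
    calc ‖(S (b - s) - S (b - s₀)) w‖ = ‖S (b - s) w - S (b - s₀) w‖ := by
          simp
      _ ≤ (|(b - s) - (b - s₀)| / ((b - s₀) / 2)) * ‖w‖ := this
      _ = 1 / ((b - s₀) / 2) * ‖s - s₀‖ * ‖w‖ := by
          rw [habs, Real.norm_eq_abs]
          ring
  have hadj_cont : Continuous (fun T : H →L[ℝ] H => adjoint T) :=
    (ContinuousLinearMap.adjoint (E := H) (F := H) (𝕜 := ℝ)).continuous
  have hS_on : ContinuousOn (fun s => S (b - s)) (Set.Ioo a b) :=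
    fun s hs => (hScont s hs).continuousWithinAt
  have hSadj_on : ContinuousOn (fun s => adjoint (S (b - s))) (Set.Ioo a b) :=
    hadj_cont.comp_continuousOn hS_on
  have hFcont : ContinuousOn F (Set.Ioo a b) := by
    rw [hF]
    exact hS_on.clm_comp (continuousOn_const.clm_comp (continuousOn_const.clm_comp hSadj_on))
  have hres : MeasureTheory.volume.restrict (Set.Ioc a b)
      = MeasureTheory.volume.restrict (Set.Ioo a b) :=
    (MeasureTheory.Measure.restrict_congr_set MeasureTheory.Ioo_ae_eq_Ioc).symm
  have hFmeas : MeasureTheory.AEStronglyMeasurable F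
      (MeasureTheory.volume.restrict (Set.Ioc a b)) := by
    rw [hres]
    exact hFcont.aestronglyMeasurable_of_isSeparable measurableSet_Ioo
      (TopologicalSpace.IsSeparable.of_separableSpace _)
  have hFbound : ∀ s ∈ Set.Ioc a b, ‖F s‖ ≤ ‖Ω‖ * ‖Ω‖ := by
    intro s hs
    have ht : 0 ≤ b - s := by linarith [hs.2]
    have hadjS : ‖adjoint (S (b - s))‖ ≤ 1 := by
      rw [hSA _ ht]
      exact hSnorm _ ht
    have c1 := ContinuousLinearMap.opNorm_comp_le (S (b - s))
      (Ω.comp ((adjoint Ω).comp (adjoint (S (b - s)))))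
    have c2 := ContinuousLinearMap.opNorm_comp_le Ω ((adjoint Ω).comp (adjoint (S (b - s))))
    have c3 := ContinuousLinearMap.opNorm_comp_le (adjoint Ω) (adjoint (S (b - s)))
    have hΩadj : ‖adjoint Ω‖ = ‖Ω‖ :=
      (ContinuousLinearMap.adjoint (𝕜 := ℝ) (E := U) (F := H)).norm_map Ω
    have hS1 : ‖S (b - s)‖ ≤ 1 := hSnorm _ ht
    have h0 : (0:ℝ) ≤ ‖Ω‖ := ContinuousLinearMap.opNorm_nonneg Ω
    rw [hF]
    simp only []
    rw [hΩadj] at c3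
    nlinarith [norm_nonneg (S (b - s)), norm_nonneg (adjoint (S (b - s))),
      norm_nonneg (Ω.comp ((adjoint Ω).comp (adjoint (S (b - s))))),
      norm_nonneg ((adjoint Ω).comp (adjoint (S (b - s))))]
  have hFint : IntervalIntegrable F MeasureTheory.volume a b := by
    rw [intervalIntegrable_iff_integrableOn_Ioc_of_le hab.le]
    have hconst : MeasureTheory.IntegrableOn (fun _ : ℝ => ‖Ω‖ * ‖Ω‖) (Set.Ioc a b)
        MeasureTheory.volume := by
      exact MeasureTheory.integrableOn_const (hs := measure_Ioc_lt_top.ne) (hC := enorm_ne_top)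
    apply MeasureTheory.Integrable.mono' hconst hFmeas
    rw [MeasureTheory.ae_restrict_iff' measurableSet_Ioc]
    exact Filter.Eventually.of_forall hFbound
  have hFint' : MeasureTheory.IntegrableOn F (Set.Ioc a b) MeasureTheory.volume :=
    (intervalIntegrable_iff_integrableOn_Ioc_of_le hab.le).1 hFint
  have hFhint : IntervalIntegrable (fun s => F s h) MeasureTheory.volume a b :=
    (intervalIntegrable_iff_integrableOn_Ioc_of_le hab.le).2
      (hFint'.apply_continuousLinearMap h)
  -- pointwise value of the quadratic form
  have hpt : ∀ s : ℝ, s ≤ b → ⟪F s h, h⟫ = ‖adjoint Ω (S (b - s) h)‖ ^ 2 := by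
    intro s hs
    have ht : 0 ≤ b - s := by linarith
    have hswap : ∀ x y : H, ⟪S (b - s) x, y⟫ = ⟪x, S (b - s) y⟫ := by
      intro x y
      conv_lhs => rw [← hSA _ ht]
      exact ContinuousLinearMap.adjoint_inner_left (S (b - s)) y x
    rw [hF]
    simp only [ContinuousLinearMap.comp_apply]
    rw [hSA _ ht, hswap, ← ContinuousLinearMap.adjoint_inner_right Ω,
      real_inner_self_eq_norm_sq]
  -- the key vanishing consequence
  have hmemU : ∀ n : ℕ, 1 ≤ n → e n ∈ U := by
    intro n hn
    rw [hU]
    exact Submodule.le_topologicalClosure _ (Submodule.subset_span ⟨n, hn, rfl⟩)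
  have hre : ∀ n m : ℕ, e.repr (e n) m = if m = n then 1 else 0 := by
    intro n m
    rw [e.repr_self]
    by_cases hmn : m = n
    · subst hmn
      rw [lp.single_apply_self, if_pos rfl]
    · rw [lp.single_apply_ne 2 n _ hmn, if_neg hmn]
  have hcoef : ∀ t, 0 ≤ t → ∀ k : ℕ, ⟪e k, S t h⟫ =
      Real.exp (-((k : ℝ) + 1) ^ 2 * t) * e.repr h k := by
    intro t ht k
    rw [← e.repr_apply_apply, hrepr t ht h k]
  have key : ∀ t, 0 ≤ t → adjoint Ω (S t h) = 0 →
      (∀ n : ℕ, 2 ≤ n → e.repr h n = 0) ∧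
      2 * (Real.exp (-1 * t) * e.repr h 0) + Real.exp (-4 * t) * e.repr h 1 = 0 := by
    intro t ht h0
    have horth : ∀ u : U, ⟪Ω u, S t h⟫ = 0 := by
      intro u
      rw [← ContinuousLinearMap.adjoint_inner_right, h0, inner_zero_right]
    have hc0 : Real.exp (-(((0:ℕ) : ℝ) + 1) ^ 2 * t) = Real.exp (-1 * t) := by norm_num
    have hc1 : Real.exp (-(((1:ℕ) : ℝ) + 1) ^ 2 * t) = Real.exp (-4 * t) := by norm_num
    constructor
    · intro n hn
      have hu := horth ⟨e n, hmemU n (by omega)⟩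
      rw [hΩ] at hu
      simp only [Submodule.coe_mk] at hu
      rw [inner_add_left, real_inner_smul_left, hre n 1, if_neg (by omega),
        hcoef t ht n] at hu
      have hcpos := Real.exp_pos (-((n : ℝ) + 1) ^ 2 * t)
      have : Real.exp (-((n : ℝ) + 1) ^ 2 * t) * e.repr h n = 0 := by linarith
      exact (mul_eq_zero.mp this).resolve_left (ne_of_gt hcpos)
    · have hu := horth ⟨e 1, hmemU 1 (le_refl 1)⟩
      rw [hΩ] at hu
      simp only [Submodule.coe_mk] at hu
      rw [inner_add_left, real_inner_smul_left, hre 1 1, if_pos rfl,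
        hcoef t ht 0, hcoef t ht 1, hc0, hc1] at hu
      linarith
  -- assembling the quadratic form as an integral
  have hΓh : ⟪Γ h, h⟫ = ∫ s in a..b, ⟪F s h, h⟫ := by
    have h1 : Γ h = ∫ s in a..b, F s h := by
      rw [hΓ]
      exact ContinuousLinearMap.intervalIntegral_apply hFint h
    have h2 : innerSL ℝ h (∫ s in a..b, F s h) = ∫ s in a..b, innerSL ℝ h (F s h) :=
      ((innerSL ℝ h).intervalIntegral_comp_comm hFhint).symm
    rw [real_inner_comm, h1]
    calc ⟪h, ∫ s in a..b, F s h⟫ = innerSL ℝ h (∫ s in a..b, F s h) := by simp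
      _ = ∫ s in a..b, innerSL ℝ h (F s h) := h2
      _ = ∫ s in a..b, ⟪F s h, h⟫ := by
          congr 1
          funext s
          simp [real_inner_comm]
  have hnn : ∀ s ∈ Set.Icc a b, 0 ≤ ⟪F s h, h⟫ := by
    intro s hs
    rw [hpt s hs.2]
    positivity
  have hgint : IntervalIntegrable (fun s => ⟪F s h, h⟫) MeasureTheory.volume a b := by
    have h3 : MeasureTheory.IntegrableOn (fun s => innerSL ℝ h (F s h)) (Set.Ioc a b)
        MeasureTheory.volume :=
      (innerSL ℝ h).integrable_comp ((intervalIntegrable_iff_integrableOn_Ioc_of_le hab.le).1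
        hFhint)
    refine (intervalIntegrable_iff_integrableOn_Ioc_of_le hab.le).2 ?_
    have heq : (fun s => ⟪F s h, h⟫) = fun s => innerSL ℝ h (F s h) := by
      funext s
      simp [real_inner_comm]
    rw [heq]
    exact h3
  by_contra hcon
  push_neg at hcon
  have hnn' : 0 ≤ ⟪Γ h, h⟫ := by
    rw [hΓh]
    exact intervalIntegral.integral_nonneg hab.le hnn
  have hzero : ∫ s in a..b, ⟪F s h, h⟫ = 0 := by
    rw [← hΓh]
    linarith
  have hae := (intervalIntegral.integral_eq_zero_iff_of_le_of_nonneg_ae hab.le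
    ((MeasureTheory.ae_restrict_iff' measurableSet_Ioc).mpr
      (Filter.Eventually.of_forall fun s hs => hnn s (Set.Ioc_subset_Icc_self hs)))
    hgint).1 hzero
  replace hae := (MeasureTheory.ae_restrict_iff' measurableSet_Ioc).mp hae
  -- extract two points where the integrand vanishes
  set T : Set ℝ := {s : ℝ | s ∈ Set.Ioc a b → ⟪F s h, h⟫ = 0} with hT
  have hTnull : MeasureTheory.volume Tᶜ = 0 := by
    have : T ∈ MeasureTheory.ae MeasureTheory.volume := hae
    rwa [MeasureTheory.mem_ae_iff] at this
  have hmeasure : MeasureTheory.volume (Set.Ioc a b ∩ T) = MeasureTheory.volume (Set.Ioc a b) :=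
    MeasureTheory.measure_inter_conull hTnull
  have hposm : 0 < MeasureTheory.volume (Set.Ioc a b ∩ T) := by
    rw [hmeasure, Real.volume_Ioc]
    exact ENNReal.ofReal_pos.mpr (by linarith)
  have hnontriv : (Set.Ioc a b ∩ T).Nontrivial := by
    by_contra hns
    rw [Set.not_nontrivial_iff] at hns
    have := hns.countable.measure_zero MeasureTheory.volume
    rw [this] at hposm
    exact lt_irrefl 0 hposm
  obtain ⟨s₁, hs₁, s₂, hs₂, hne⟩ := hnontriv
  have hv : ∀ s : ℝ, s ∈ Set.Ioc a b ∩ T → adjoint Ω (S (b - s) h) = 0 := by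
    intro s hs
    have h1 : ⟪F s h, h⟫ = 0 := hs.2 hs.1
    rw [hpt s hs.1.2] at h1
    have := pow_eq_zero_iff (n := 2) (by norm_num) |>.mp h1
    exact norm_eq_zero.mp this
  have ht₁ : 0 ≤ b - s₁ := by linarith [hs₁.1.2]
  have ht₂ : 0 ≤ b - s₂ := by linarith [hs₂.1.2]
  have K₁ := key (b - s₁) ht₁ (hv s₁ hs₁)
  have K₂ := key (b - s₂) ht₂ (hv s₂ hs₂)
  have htne : b - s₁ ≠ b - s₂ := by
    intro hcontra
    apply hne
    linarith
  -- deduce the first two coefficients vanish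
  have h1zero : e.repr h 1 = 0 := by
    by_contra hy
    have E1 := K₁.2
    have E2 := K₂.2
    have hfac : (Real.exp (-4 * (b - s₁)) * Real.exp (-1 * (b - s₂))
        - Real.exp (-4 * (b - s₂)) * Real.exp (-1 * (b - s₁))) * e.repr h 1 = 0 := by
      linear_combination Real.exp (-1 * (b - s₂)) * E1 - Real.exp (-1 * (b - s₁)) * E2
    have hfac0 := (mul_eq_zero.mp hfac).resolve_right hy
    rw [← Real.exp_add, ← Real.exp_add, sub_eq_zero] at hfac0
    have := Real.exp_eq_exp.mp hfac0
    apply htne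
    linarith
  have h0zero : e.repr h 0 = 0 := by
    have E1 := K₁.2
    rw [h1zero] at E1
    have hcpos := Real.exp_pos (-1 * (b - s₁))
    have : Real.exp (-1 * (b - s₁)) * e.repr h 0 = 0 := by linarith
    exact (mul_eq_zero.mp this).resolve_left (ne_of_gt hcpos)
  have hall : ∀ n : ℕ, e.repr h n = 0 := by
    intro n
    match n with
    | 0 => exact h0zero
    | 1 => exact h1zero
    | (m + 2) => exact K₁.1 (m + 2) (by omega)
  apply hh
  have hrzero : e.repr h = 0 := by
    ext n
    exact hall n
  exact e.repr.map_eq_zero_iff.mp hrzero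
end
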